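/- For each $i \in \mathbb{N}$ let $\varepsilon_i > 0$, $\beta_i \in (0, \frac{1}{80})$ and $w_i \in (-1,1)$ be given such that $\sum_{i=1}^{\infty} \beta_i = \frac{1}{4}$, $\sum_{i=1}^{\infty} \varepsilon_i < \frac{1}{24}$, and the intervals $(w_i - \varepsilon_i, w_i + \varepsilon_i)$ are pairwise disjoint subsets of $[-1,1]$. Define $g_i(x,y) := g_{\beta_i, \varepsilon_i}(x - w_i, y)$ and $h_i(x,y) := g_{\beta_i, \varepsilon_i}(y - w_i, x)$, define $f : \mathbb{R}^2 \to \mathbb{R}$ by $f(x,y) := -xy + \sum_{i=1}^{4} f_i(x,y) + \sum_{i=1}^{\infty} (g_i(x,y) + h_i(x,y))$, and set $K := [-1,1] \setminus \bigcup_{i=1}^{\infty} (w_i - \varepsilon_i, w_i + \varepsilon_i)$. Then: (a) $\frac{f(-1,-1) + f(1,1)}{2} < f(0,0)$, so $f$ is non-convex; and (b) $f$ is locally convex on $\mathbb{R}^2 \setminus K^2$, where $K^2 = K \times K$. -/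

import Mathlib

/-- `f` is locally convex on the open set `U`: every point of `U` has an open convex
neighbourhood `V ⊆ U` on which `f` is convex. -/
def IsLocallyConvexOn (U : Set (ℝ × ℝ)) (f : ℝ × ℝ → ℝ) : Prop :=
  ∀ x ∈ U, ∃ V : Set (ℝ × ℝ),
    IsOpen V ∧ Convex ℝ V ∧ x ∈ V ∧ V ⊆ U ∧ ConvexOn ℝ V f

/-- The function `g_{β,ε}` from the paper. -/
noncomputable def gBE (β ε : ℝ) (p : ℝ × ℝ) : ℝ :=
  if p.1 ≤ -ε then β * p.2 ^ 2 - 2 * ε * p.1 - ε ^ 2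
  else if p.1 < ε then β * p.2 ^ 2 + p.1 ^ 2
  else β * p.2 ^ 2 + 2 * ε * p.1 - ε ^ 2

/-- The function `f₁` from the paper. -/
noncomputable def fOne (p : ℝ × ℝ) : ℝ :=
  if 1 < p.2 then (1 / 12) * p.1 ^ 2 + 4 * (p.2 - 1) ^ 2
  else (1 / 12) * p.1 ^ 2

/-- `f₂(x,y) = f₁(x,-y)`. -/
noncomputable def fTwo (p : ℝ × ℝ) : ℝ := fOne (p.1, -p.2)

/-- `f₃(x,y) = f₁(y,x)`. -/
noncomputable def fThree (p : ℝ × ℝ) : ℝ := fOne (p.2, p.1)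

/-- `f₄(x,y) = f₃(-x,y)`. -/
noncomputable def fFour (p : ℝ × ℝ) : ℝ := fThree (-p.1, p.2)


open Set

noncomputable def psiA (e x : ℝ) : ℝ :=
  if x ≤ -e then -(2*e*x) - e^2 else if x < e then x^2 else 2*e*x - e^2

noncomputable def phiA (y : ℝ) : ℝ := if 1 < y then 4*(y-1)^2 else 0

lemma gBE_eq (b e : ℝ) (p : ℝ × ℝ) : gBE b e p = b * p.2^2 + psiA e p.1 := by
  unfold gBE psiA; split_ifs <;> ring

lemma fOne_eq (p : ℝ × ℝ) : fOne p = (1/12) * p.1^2 + phiA p.2 := by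
  unfold fOne phiA; split_ifs <;> ring

lemma psiA_nonneg {e : ℝ} (he : 0 < e) (x : ℝ) : 0 ≤ psiA e x := by
  unfold psiA; split_ifs <;> nlinarith

lemma psiA_le {e : ℝ} (he : 0 < e) (x : ℝ) : psiA e x ≤ 2*e*|x| := by
  unfold psiA
  rcases abs_cases x with ⟨h1, h2⟩ | ⟨h1, h2⟩ <;> rw [h1] <;> split_ifs <;> nlinarith

lemma phiA_nonneg (y : ℝ) : 0 ≤ phiA y := by
  unfold phiA; split_ifs <;> positivity

lemma support_convex (φ : ℝ → ℝ) (hs : ∀ z, ∃ m, ∀ x, φ z + m*(x-z) ≤ φ x) :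
    ConvexOn ℝ univ φ := by
  refine ⟨convex_univ, fun x _ y _ a b ha hb hab => ?_⟩
  have hb' : b = 1 - a := by linarith
  subst hb'
  obtain ⟨m, hm⟩ := hs (a • x + (1 - a) • y)
  have h1 := hm x
  have h2 := hm y
  simp only [smul_eq_mul] at *
  nlinarith [mul_le_mul_of_nonneg_left h1 ha, mul_le_mul_of_nonneg_left h2 hb]

lemma psiA_convex {e : ℝ} (he : 0 < e) : ConvexOn ℝ univ (psiA e) := by
  apply support_convex
  intro z
  refine ⟨if z ≤ -e then -(2*e) else if z < e then 2*z else 2*e, fun x => ?_⟩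
  unfold psiA
  split_ifs <;>
    nlinarith [sq_nonneg (x - z), sq_nonneg (x + e), sq_nonneg (x - e), sq_nonneg (z + e),
      sq_nonneg (z - e), sq_nonneg (x + z)]

lemma phiA_convex : ConvexOn ℝ univ phiA := by
  apply support_convex
  intro z
  refine ⟨if 1 < z then 8*(z-1) else 0, fun x => ?_⟩
  unfold phiA
  split_ifs <;> nlinarith [sq_nonneg (x - z), sq_nonneg (z - 1), sq_nonneg (x - 1)]

lemma convexOn_tsum {u : ℕ → ℝ × ℝ → ℝ} (hc : ∀ j, ConvexOn ℝ univ (u j))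
    (hs : ∀ p, Summable (fun j => u j p)) :
    ConvexOn ℝ univ (fun p => ∑' j, u j p) := by
  refine ⟨convex_univ, fun x _ y _ a b ha hb hab => ?_⟩
  have hle : ∀ j, u j (a • x + b • y) ≤ a * u j x + b * u j y := fun j => by
    simpa [smul_eq_mul] using (hc j).2 (mem_univ x) (mem_univ y) ha hb hab
  have hsum : Summable (fun j => a * u j x + b * u j y) :=
    ((hs x).mul_left a).add ((hs y).mul_left b)
  calc ∑' j, u j (a • x + b • y) ≤ ∑' j, (a * u j x + b * u j y) :=
        Summable.tsum_le_tsum hle (hs _) hsum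
    _ = a • ∑' j, u j x + b • ∑' j, u j y := by
        rw [Summable.tsum_add ((hs x).mul_left a) ((hs y).mul_left b), tsum_mul_left, tsum_mul_left]
        simp [smul_eq_mul]

lemma lift1 (φ : ℝ → ℝ) (h : ConvexOn ℝ univ φ) (a w : ℝ) :
    ConvexOn ℝ univ (fun p : ℝ × ℝ => φ (a * p.1 - w)) := by
  refine ⟨convex_univ, fun x _ y _ s t hs ht hst => ?_⟩
  have h2 := h.2 (mem_univ (a * x.1 - w)) (mem_univ (a * y.1 - w)) hs ht hst
  have e : a * (s • x + t • y).1 - w = s • (a * x.1 - w) + t • (a * y.1 - w) := by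
    simp only [Prod.fst_add, Prod.smul_fst, smul_eq_mul]
    linear_combination w * hst
  rw [← e] at h2
  simpa using h2

lemma lift2 (φ : ℝ → ℝ) (h : ConvexOn ℝ univ φ) (a w : ℝ) :
    ConvexOn ℝ univ (fun p : ℝ × ℝ => φ (a * p.2 - w)) := by
  refine ⟨convex_univ, fun x _ y _ s t hs ht hst => ?_⟩
  have h2 := h.2 (mem_univ (a * x.2 - w)) (mem_univ (a * y.2 - w)) hs ht hst
  have e : a * (s • x + t • y).2 - w = s • (a * x.2 - w) + t • (a * y.2 - w) := by
    simp only [Prod.snd_add, Prod.smul_snd, smul_eq_mul]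
    linear_combination w * hst
  rw [← e] at h2
  simpa using h2

lemma discrimNonneg (A B C u v : ℝ) (hA : 0 ≤ A) (hC : 0 ≤ C) (hD : B^2 ≤ 4*A*C) :
    0 ≤ A*u^2 + B*(u*v) + C*v^2 := by
  rcases eq_or_lt_of_le hA with hA0 | hA0
  · have hB : B = 0 := by nlinarith [sq_nonneg B]
    rw [← hA0, hB]
    nlinarith [mul_nonneg hC (sq_nonneg v)]
  · nlinarith [sq_nonneg (2*A*u + B*v), mul_nonneg (sub_nonneg.2 hD) (sq_nonneg v)]

lemma quadConvex (A B C d e c0 : ℝ) (hA : 0 ≤ A) (hC : 0 ≤ C) (hD : B^2 ≤ 4*A*C) :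
    ConvexOn ℝ univ (fun p : ℝ × ℝ =>
      A*p.1^2 + B*(p.1*p.2) + C*p.2^2 + d*p.1 + e*p.2 + c0) := by
  refine ⟨convex_univ, fun x _ y _ s t hs ht hst => ?_⟩
  have ht' : t = 1 - s := by linarith
  subst ht'
  simp only [Prod.fst_add, Prod.snd_add, Prod.smul_fst, Prod.smul_snd, smul_eq_mul]
  have key := discrimNonneg A B C (x.1 - y.1) (x.2 - y.2) hA hC hD
  nlinarith [mul_nonneg (mul_nonneg hs ht) key]

lemma loc_case {f F : ℝ × ℝ → ℝ} {V U : Set (ℝ × ℝ)} (p : ℝ × ℝ)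
    (hV : IsOpen V) (hVc : Convex ℝ V) (hpV : p ∈ V) (hVU : V ⊆ U)
    (hF : ConvexOn ℝ univ F) (heq : ∀ q ∈ V, f q = F q) :
    ∃ V' : Set (ℝ × ℝ), IsOpen V' ∧ Convex ℝ V' ∧ p ∈ V' ∧ V' ⊆ U ∧ ConvexOn ℝ V' f := by
  refine ⟨V, hV, hVc, hpV, hVU, hVc, fun x hx y hy a b ha hb hab => ?_⟩
  rw [heq _ hx, heq _ hy, heq _ (hVc hx hy ha hb hab)]
  exact (hF.subset (subset_univ V) hVc).2 hx hy ha hb hab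
lemma psiA_mid {e x : ℝ} (h1 : -e < x) (h2 : x < e) : psiA e x = x^2 := by
  unfold psiA; rw [if_neg (by linarith), if_pos h2]

lemma phiA_pos {y : ℝ} (h : 1 < y) : phiA y = 4*(y-1)^2 := by
  unfold phiA; rw [if_pos h]

lemma phiA_npos {y : ℝ} (h : y ≤ 1) : phiA y = 0 := by
  unfold phiA; rw [if_neg (not_lt.2 h)]

theorem statement11 (ε β w : ℕ → ℝ)
    (hε : ∀ i, 0 < ε i) (hβ : ∀ i, β i ∈ Set.Ioo (0 : ℝ) (1 / 80))
    (hw : ∀ i, w i ∈ Set.Ioo (-1 : ℝ) 1)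
    (hβsum : ∑' i, β i = 1 / 4)
    (hεsummable : Summable ε) (hεsum : ∑' i, ε i < 1 / 24)
    (hdisj : Pairwise (Function.onFun Disjoint
      fun i => Set.Ioo (w i - ε i) (w i + ε i)))
    (hsub : ∀ i, Set.Ioo (w i - ε i) (w i + ε i) ⊆ Set.Icc (-1 : ℝ) 1)
    (g h : ℕ → ℝ × ℝ → ℝ)
    (hg : ∀ i p, g i p = gBE (β i) (ε i) (p.1 - w i, p.2))
    (hh : ∀ i p, h i p = gBE (β i) (ε i) (p.2 - w i, p.1))
    (f : ℝ × ℝ → ℝ)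
    (hf : ∀ p : ℝ × ℝ, f p = -(p.1 * p.2) + (fOne p + fTwo p + fThree p + fFour p)
      + ∑' i, (g i p + h i p))
    (K : Set ℝ)
    (hK : K = Set.Icc (-1 : ℝ) 1 \ ⋃ i, Set.Ioo (w i - ε i) (w i + ε i)) :
    ((f (-1, -1) + f (1, 1)) / 2 < f (0, 0) ∧ ¬ ConvexOn ℝ Set.univ f) ∧
      IsLocallyConvexOn (K ×ˢ K)ᶜ f := by
  classical
  have hβs : Summable β := by
    by_contra hcon
    rw [tsum_eq_zero_of_not_summable hcon] at hβsum
    norm_num at hβsum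
  set c : ℕ → ℝ × ℝ → ℝ := fun i p => psiA (ε i) (p.1 - w i) + psiA (ε i) (p.2 - w i)
    with hc_def
  have hcnonneg : ∀ i p, 0 ≤ c i p := fun i p =>
    add_nonneg (psiA_nonneg (hε i) _) (psiA_nonneg (hε i) _)
  have hcle : ∀ i p, c i p ≤ ε i * (2*|p.1| + 2*|p.2| + 4) := by
    intro i p
    have h1 := psiA_le (hε i) (p.1 - w i)
    have h2 := psiA_le (hε i) (p.2 - w i)
    have hw1 : |w i| ≤ 1 := le_of_lt (abs_lt.2 ⟨(hw i).1, (hw i).2⟩)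
    have a1 : |p.1 - w i| ≤ |p.1| + 1 :=
      (abs_sub _ _).trans (add_le_add_right hw1 _)
    have a2 : |p.2 - w i| ≤ |p.2| + 1 :=
      (abs_sub _ _).trans (add_le_add_right hw1 _)
    have hεi := (hε i).le
    simp only [hc_def]
    nlinarith [mul_le_mul_of_nonneg_left a1 (by positivity : (0:ℝ) ≤ 2 * ε i),
      mul_le_mul_of_nonneg_left a2 (by positivity : (0:ℝ) ≤ 2 * ε i)]
  have hcsum : ∀ p, Summable (fun i => c i p) := fun p =>
    Summable.of_nonneg_of_le (fun i => hcnonneg i p) (fun i => hcle i p)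
      (hεsummable.mul_right _)
  have hmaster : ∀ q : ℝ × ℝ, f q = -(q.1*q.2) + (5/12)*(q.1^2+q.2^2)
      + (phiA q.1 + phiA (-q.1) + phiA q.2 + phiA (-q.2)) + ∑' i, c i q := by
    intro q
    have hterm : ∀ i, g i q + h i q = β i * (q.1^2+q.2^2) + c i q := by
      intro i
      rw [hg, hh, gBE_eq, gBE_eq]
      simp only [hc_def]
      ring
    rw [hf, tsum_congr hterm, Summable.tsum_add (hβs.mul_right _) (hcsum q), tsum_mul_right, hβsum]
    simp only [fTwo, fThree, fFour, fOne_eq]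
    ring
  -- part (a)
  have hC00 : (0:ℝ) ≤ ∑' i, c i ((0:ℝ), (0:ℝ)) := tsum_nonneg fun i => hcnonneg i _
  have hεnn : (0:ℝ) ≤ ∑' i, ε i := tsum_nonneg fun i => (hε i).le
  have hCb : (∑' i, c i ((1:ℝ),(1:ℝ))) + (∑' i, c i ((-1:ℝ),(-1:ℝ))) ≤ 8 * ∑' i, ε i := by
    rw [← Summable.tsum_add (hcsum _) (hcsum _), ← tsum_mul_left]
    refine Summable.tsum_le_tsum (fun i => ?_) ((hcsum _).add (hcsum _)) (hεsummable.mul_left 8)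
    have hw1 := (hw i).1
    have hw2 := (hw i).2
    have h1 := psiA_le (hε i) ((1:ℝ) - w i)
    have h2 := psiA_le (hε i) ((-1:ℝ) - w i)
    rw [abs_of_pos (by linarith)] at h1
    rw [abs_of_neg (by linarith)] at h2
    simp only [hc_def]
    norm_num
    nlinarith [hε i]
  have h11 : f (1, 1) = -(1/6) + ∑' i, c i ((1:ℝ),(1:ℝ)) := by
    rw [hmaster (1, 1)]
    norm_num [phiA_npos]
  have hm1 : f (-1, -1) = -(1/6) + ∑' i, c i ((-1:ℝ),(-1:ℝ)) := by
    rw [hmaster (-1, -1)]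
    norm_num [phiA_npos]
  have h00 : f (0, 0) = ∑' i, c i ((0:ℝ),(0:ℝ)) := by
    rw [hmaster (0, 0)]
    norm_num [phiA_npos]
  have hpa : (f (-1, -1) + f (1, 1)) / 2 < f (0, 0) := by
    rw [h11, hm1, h00]
    linarith
  refine ⟨⟨hpa, ?_⟩, ?_⟩
  · intro hcv
    have hkey := hcv.2 (Set.mem_univ ((1:ℝ),(1:ℝ))) (Set.mem_univ ((-1:ℝ),(-1:ℝ)))
      (by norm_num : (0:ℝ) ≤ 1/2) (by norm_num : (0:ℝ) ≤ 1/2) (by norm_num : (1:ℝ)/2 + 1/2 = 1)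
    have harg : ((1:ℝ)/2) • ((1:ℝ),(1:ℝ)) + ((1:ℝ)/2) • ((-1:ℝ),(-1:ℝ)) = ((0:ℝ),(0:ℝ)) := by
      simp [Prod.ext_iff]
    rw [harg] at hkey
    simp only [smul_eq_mul] at hkey
    linarith
  -- part (b)
  intro p hp
  -- shared convexity facts
  have hφ1 : ConvexOn ℝ Set.univ (fun q : ℝ × ℝ => phiA q.1) := by
    have h0 := lift1 phiA phiA_convex 1 0
    have e : (fun q : ℝ × ℝ => phiA (1 * q.1 - 0)) = fun q : ℝ × ℝ => phiA q.1 := by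
      funext q; rw [one_mul, sub_zero]
    rwa [e] at h0
  have hφ1n : ConvexOn ℝ Set.univ (fun q : ℝ × ℝ => phiA (-q.1)) := by
    have h0 := lift1 phiA phiA_convex (-1) 0
    have e : (fun q : ℝ × ℝ => phiA (-1 * q.1 - 0)) = fun q : ℝ × ℝ => phiA (-q.1) := by
      funext q; rw [neg_one_mul, sub_zero]
    rwa [e] at h0
  have hφ2 : ConvexOn ℝ Set.univ (fun q : ℝ × ℝ => phiA q.2) := by
    have h0 := lift2 phiA phiA_convex 1 0
    have e : (fun q : ℝ × ℝ => phiA (1 * q.2 - 0)) = fun q : ℝ × ℝ => phiA q.2 := by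
      funext q; rw [one_mul, sub_zero]
    rwa [e] at h0
  have hφ2n : ConvexOn ℝ Set.univ (fun q : ℝ × ℝ => phiA (-q.2)) := by
    have h0 := lift2 phiA phiA_convex (-1) 0
    have e : (fun q : ℝ × ℝ => phiA (-1 * q.2 - 0)) = fun q : ℝ × ℝ => phiA (-q.2) := by
      funext q; rw [neg_one_mul, sub_zero]
    rwa [e] at h0
  have hψ1 : ∀ i, ConvexOn ℝ Set.univ (fun q : ℝ × ℝ => psiA (ε i) (q.1 - w i)) := by
    intro i
    have h0 := lift1 (psiA (ε i)) (psiA_convex (hε i)) 1 (w i)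
    have e : (fun q : ℝ × ℝ => psiA (ε i) (1 * q.1 - w i))
        = fun q : ℝ × ℝ => psiA (ε i) (q.1 - w i) := by
      funext q; rw [one_mul]
    rwa [e] at h0
  have hψ2 : ∀ i, ConvexOn ℝ Set.univ (fun q : ℝ × ℝ => psiA (ε i) (q.2 - w i)) := by
    intro i
    have h0 := lift2 (psiA (ε i)) (psiA_convex (hε i)) 1 (w i)
    have e : (fun q : ℝ × ℝ => psiA (ε i) (1 * q.2 - w i))
        = fun q : ℝ × ℝ => psiA (ε i) (q.2 - w i) := by
      funext q; rw [one_mul]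
    rwa [e] at h0
  have hcconv : ∀ i, ConvexOn ℝ Set.univ (c i) := fun i => (hψ1 i).add (hψ2 i)
  have hCconv : ConvexOn ℝ Set.univ (fun q : ℝ × ℝ => ∑' i, c i q) :=
    convexOn_tsum hcconv hcsum
  have hlinfst : IsLinearMap ℝ (fun q : ℝ × ℝ => q.1) := ⟨fun _ _ => rfl, fun _ _ => rfl⟩
  have hlinsnd : IsLinearMap ℝ (fun q : ℝ × ℝ => q.2) := ⟨fun _ _ => rfl, fun _ _ => rfl⟩
  have hKgt : ∀ x : ℝ, 1 < x → x ∉ K := by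
    intro x hx
    rw [hK, Set.mem_diff, Set.mem_Icc]
    rintro ⟨⟨_, h2⟩, _⟩
    linarith
  have hKlt : ∀ x : ℝ, x < -1 → x ∉ K := by
    intro x hx
    rw [hK, Set.mem_diff, Set.mem_Icc]
    rintro ⟨⟨h2, _⟩, _⟩
    linarith
  have hKmid : ∀ (i : ℕ) (x : ℝ), w i - ε i < x → x < w i + ε i → x ∉ K := by
    intro i x h1 h2
    rw [hK, Set.mem_diff]
    rintro ⟨_, hn⟩
    exact hn (Set.mem_iUnion.2 ⟨i, Set.mem_Ioo.2 ⟨h1, h2⟩⟩)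
  have hnotK : ∀ x : ℝ, x ∉ K →
      x < -1 ∨ 1 < x ∨ ∃ i, w i - ε i < x ∧ x < w i + ε i := by
    intro x hx
    rw [hK, Set.mem_diff, not_and_or, not_not] at hx
    rcases hx with hA | hB
    · rw [Set.mem_Icc, not_and_or] at hA
      rcases hA with hA | hA
      · exact Or.inl (by push_neg at hA; linarith)
      · exact Or.inr (Or.inl (by push_neg at hA; linarith))
    · obtain ⟨i, hi⟩ := Set.mem_iUnion.1 hB
      exact Or.inr (Or.inr ⟨i, hi.1, hi.2⟩)
  -- ite-tsum convexity, per index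
  have hdconv : ∀ i, ConvexOn ℝ Set.univ
      (fun q : ℝ × ℝ => ∑' j, if j = i then 0 else c j q) := by
    intro i
    apply convexOn_tsum (u := fun j q => if j = i then 0 else c j q)
    · intro j
      by_cases hj : j = i
      · simpa [hj] using convexOn_const (0:ℝ) convex_univ
      · simpa [hj] using hcconv j
    · intro q
      refine Summable.of_nonneg_of_le (fun j => ?_) (fun j => ?_) (hcsum q)
      · split_ifs
        · exact le_rfl
        · exact hcnonneg _ _
      · split_ifs with hj
        · exact hcnonneg _ _
        · exact le_rfl
  have hp' : p.1 ∉ K ∨ p.2 ∉ K := by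
    rw [Set.mem_compl_iff, Set.mem_prod, not_and_or] at hp
    exact hp
  rcases hp' with h1 | h1
  · rcases hnotK _ h1 with hx | hx | ⟨i, hi1, hi2⟩
    · -- p.1 < -1
      refine loc_case (V := {q : ℝ × ℝ | q.1 < -1}) p
        (isOpen_lt continuous_fst continuous_const)
        (convex_halfSpace_lt hlinfst (-1)) hx
        (fun q hq => by
          simp only [Set.mem_compl_iff, Set.mem_prod, not_and_or]
          exact Or.inl (hKlt q.1 hq))
        ((quadConvex (53/12) (-1) (5/12) 8 0 4 (by norm_num) (by norm_num) (by norm_num)).add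
          ((((hφ1.add hφ2).add hφ2n)).add hCconv))
        (fun q hq => ?_)
      have hq' : q.1 < -1 := hq
      rw [hmaster q]
      simp only [Pi.add_apply]
      rw [show phiA (-q.1) = 4*(-q.1-1)^2 from phiA_pos (by linarith)]
      ring
    · -- 1 < p.1
      refine loc_case (V := {q : ℝ × ℝ | 1 < q.1}) p
        (isOpen_lt continuous_const continuous_fst)
        (convex_halfSpace_gt hlinfst 1) hx
        (fun q hq => by
          simp only [Set.mem_compl_iff, Set.mem_prod, not_and_or]
          exact Or.inl (hKgt q.1 hq))
        ((quadConvex (53/12) (-1) (5/12) (-8) 0 4 (by norm_num) (by norm_num) (by norm_num)).add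
          ((((hφ1n.add hφ2).add hφ2n)).add hCconv))
        (fun q hq => ?_)
      have hq' : (1:ℝ) < q.1 := hq
      rw [hmaster q]
      simp only [Pi.add_apply]
      rw [show phiA q.1 = 4*(q.1-1)^2 from phiA_pos hq']
      ring
    · -- p.1 in the i-th interval
      refine loc_case (V := {q : ℝ × ℝ | w i - ε i < q.1 ∧ q.1 < w i + ε i}) p
        ((isOpen_lt continuous_const continuous_fst).inter
          (isOpen_lt continuous_fst continuous_const))
        ((convex_halfSpace_gt hlinfst (w i - ε i)).inter
          (convex_halfSpace_lt hlinfst (w i + ε i))) ⟨hi1, hi2⟩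
        (fun q hq => by
          simp only [Set.mem_compl_iff, Set.mem_prod, not_and_or]
          exact Or.inl (hKmid i q.1 hq.1 hq.2))
        ((quadConvex (17/12) (-1) (5/12) (-2*w i) 0 ((w i)^2)
            (by norm_num) (by norm_num) (by norm_num)).add
          (((((hφ1.add hφ1n).add hφ2).add hφ2n)).add ((hψ2 i).add (hdconv i))))
        (fun q hq => ?_)
      obtain ⟨hq1, hq2⟩ := hq
      rw [hmaster q, Summable.tsum_eq_add_tsum_ite (hcsum q) i]
      have e1 : c i q = (q.1 - w i)^2 + psiA (ε i) (q.2 - w i) := by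
        simp only [hc_def]
        rw [psiA_mid (e := ε i) (x := q.1 - w i) (by linarith) (by linarith)]
      rw [e1]
      simp only [Pi.add_apply]
      ring
  · rcases hnotK _ h1 with hx | hx | ⟨i, hi1, hi2⟩
    · -- p.2 < -1
      refine loc_case (V := {q : ℝ × ℝ | q.2 < -1}) p
        (isOpen_lt continuous_snd continuous_const)
        (convex_halfSpace_lt hlinsnd (-1)) hx
        (fun q hq => by
          simp only [Set.mem_compl_iff, Set.mem_prod, not_and_or]
          exact Or.inr (hKlt q.2 hq))
        ((quadConvex (5/12) (-1) (53/12) 0 8 4 (by norm_num) (by norm_num) (by norm_num)).add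
          ((((hφ1.add hφ1n).add hφ2)).add hCconv))
        (fun q hq => ?_)
      have hq' : q.2 < -1 := hq
      rw [hmaster q]
      simp only [Pi.add_apply]
      rw [show phiA (-q.2) = 4*(-q.2-1)^2 from phiA_pos (by linarith)]
      ring
    · -- 1 < p.2
      refine loc_case (V := {q : ℝ × ℝ | 1 < q.2}) p
        (isOpen_lt continuous_const continuous_snd)
        (convex_halfSpace_gt hlinsnd 1) hx
        (fun q hq => by
          simp only [Set.mem_compl_iff, Set.mem_prod, not_and_or]
          exact Or.inr (hKgt q.2 hq))
        ((quadConvex (5/12) (-1) (53/12) 0 (-8) 4 (by norm_num) (by norm_num) (by norm_num)).add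
          ((((hφ1.add hφ1n).add hφ2n)).add hCconv))
        (fun q hq => ?_)
      have hq' : (1:ℝ) < q.2 := hq
      rw [hmaster q]
      simp only [Pi.add_apply]
      rw [show phiA q.2 = 4*(q.2-1)^2 from phiA_pos hq']
      ring
    · -- p.2 in the i-th interval
      refine loc_case (V := {q : ℝ × ℝ | w i - ε i < q.2 ∧ q.2 < w i + ε i}) p
        ((isOpen_lt continuous_const continuous_snd).inter
          (isOpen_lt continuous_snd continuous_const))
        ((convex_halfSpace_gt hlinsnd (w i - ε i)).inter
          (convex_halfSpace_lt hlinsnd (w i + ε i))) ⟨hi1, hi2⟩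
        (fun q hq => by
          simp only [Set.mem_compl_iff, Set.mem_prod, not_and_or]
          exact Or.inr (hKmid i q.2 hq.1 hq.2))
        ((quadConvex (5/12) (-1) (17/12) 0 (-2*w i) ((w i)^2)
            (by norm_num) (by norm_num) (by norm_num)).add
          (((((hφ1.add hφ1n).add hφ2).add hφ2n)).add ((hψ1 i).add (hdconv i))))
        (fun q hq => ?_)
      obtain ⟨hq1, hq2⟩ := hq
      rw [hmaster q, Summable.tsum_eq_add_tsum_ite (hcsum q) i]
      have e1 : c i q = psiA (ε i) (q.1 - w i) + (q.2 - w i)^2 := by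
        simp only [hc_def]
        rw [psiA_mid (e := ε i) (x := q.2 - w i) (by linarith) (by linarith)]
      rw [e1]
      simp only [Pi.add_apply]
      ring
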